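/- arXiv:1301.6209 — 6 statements merged into one kernel-verified Lean document; each statement's English description precedes it below -/
import Mathlib

section
/- Define R11IF = log2(1+aP), R22IF = log2(1+dP), R12IAN = log2(1+bP/(1+aP)), R21IAN = log2(1+cP/(1+dP)), with a,b,c,d,P > 0. If R12IAN > R22IF and R21IAN > R11IF, then R11IF + R22IF ≤ min{log2(1+(a+b)P), log2(1+(c+d)P)}. -/
open Real

theorem stmt4 (a b c d P : ℝ) (ha : 0 < a) (hb : 0 < b) (hc : 0 < c) (hd : 0 < d)
    (hP : 0 < P)
    (h1 : logb 2 (1 + b * P / (1 + a * P)) > logb 2 (1 + d * P))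
    (h2 : logb 2 (1 + c * P / (1 + d * P)) > logb 2 (1 + a * P)) :
    logb 2 (1 + a * P) + logb 2 (1 + d * P) ≤
      min (logb 2 (1 + (a + b) * P)) (logb 2 (1 + (c + d) * P)) := by
  have hA : (0:ℝ) < 1 + a * P := by positivity
  have hD : (0:ℝ) < 1 + d * P := by positivity
  have hB : (0:ℝ) < 1 + b * P / (1 + a * P) := by positivity
  have hC : (0:ℝ) < 1 + c * P / (1 + d * P) := by positivity
  have h2lt : (1:ℝ) < 2 := one_lt_two
  have h1' : 1 + d * P < 1 + b * P / (1 + a * P) :=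
    (Real.logb_lt_logb_iff h2lt hD hB).mp h1
  have h2' : 1 + a * P < 1 + c * P / (1 + d * P) :=
    (Real.logb_lt_logb_iff h2lt hA hC).mp h2
  have k1 : (1 + a * P) * (1 + d * P) ≤ 1 + (a + b) * P := by
    have h := mul_lt_mul_of_pos_left h1' hA
    have : (1 + a * P) * (b * P / (1 + a * P)) = b * P := by field_simp
    nlinarith
  have k2 : (1 + a * P) * (1 + d * P) ≤ 1 + (c + d) * P := by
    have h := mul_lt_mul_of_pos_left h2' hD
    have : (1 + d * P) * (c * P / (1 + d * P)) = c * P := by field_simp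
    nlinarith
  rw [← Real.logb_mul (ne_of_gt hA) (ne_of_gt hD)]
  exact le_min (Real.logb_le_logb_of_le h2lt (by positivity) k1)
    (Real.logb_le_logb_of_le h2lt (by positivity) k2)
end

section
/- For a,b,c,d,P > 0: if log2(1+bP) < log2(1+dP/(1+cP)) and log2(1+cP) < log2(1+aP/(1+bP)) (i.e., R12IF < R22IAN and R21IF < R11IAN), then log2(1+aP/(1+bP)) + log2(1+dP/(1+cP)) > max{log2(1+(a+b)P), log2(1+(c+d)P)}. -/
open Real

theorem stmt6 (a b c d P : ℝ) (ha : 0 < a) (hb : 0 < b) (hc : 0 < c) (hd : 0 < d)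
    (hP : 0 < P)
    (h1 : logb 2 (1 + b * P) < logb 2 (1 + d * P / (1 + c * P)))
    (h2 : logb 2 (1 + c * P) < logb 2 (1 + a * P / (1 + b * P))) :
    logb 2 (1 + a * P / (1 + b * P)) + logb 2 (1 + d * P / (1 + c * P)) >
      max (logb 2 (1 + (a + b) * P)) (logb 2 (1 + (c + d) * P)) := by
  have hbP : (0:ℝ) < 1 + b * P := by positivity
  have hcP : (0:ℝ) < 1 + c * P := by positivity
  have hA : (0:ℝ) < 1 + a * P / (1 + b * P) := by positivity
  have hD : (0:ℝ) < 1 + d * P / (1 + c * P) := by positivity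
  have h2' : (1:ℝ) < 2 := one_lt_two
  have h1' : 1 + b * P < 1 + d * P / (1 + c * P) :=
    (logb_lt_logb_iff h2' hbP hD).mp h1
  have h2'' : 1 + c * P < 1 + a * P / (1 + b * P) :=
    (logb_lt_logb_iff h2' hcP hA).mp h2
  have key : logb 2 (1 + a * P / (1 + b * P)) + logb 2 (1 + d * P / (1 + c * P))
      = logb 2 ((1 + a * P / (1 + b * P)) * (1 + d * P / (1 + c * P))) :=
    (logb_mul hA.ne' hD.ne').symm
  rw [key, gt_iff_lt, max_lt_iff]
  constructor
  · apply logb_lt_logb h2' (by positivity)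
    have h3 : 1 + a * P / (1 + b * P) = (1 + (a + b) * P) / (1 + b * P) := by
      field_simp; ring
    rw [h3, div_mul_eq_mul_div, lt_div_iff₀ hbP]
    have hab : (0:ℝ) < 1 + (a + b) * P := by positivity
    nlinarith [mul_lt_mul_of_pos_left h1' hab]
  · apply logb_lt_logb h2' (by positivity)
    have h3 : 1 + d * P / (1 + c * P) = (1 + (c + d) * P) / (1 + c * P) := by
      field_simp; ring
    rw [h3, ← mul_div_assoc, lt_div_iff₀ hcP]
    have hcd : (0:ℝ) < 1 + (c + d) * P := by positivity
    nlinarith [mul_lt_mul_of_pos_left h2'' hcd]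
end

section
/- For a,b,c,d,P > 0: if log2(1+(a+b)P) = log2(1+(c+d)P) (equal MAC qualities) and neither condition (a) (R12IAN > R22IF and R21IAN > R11IF) nor condition (b) (R12IF < R22IAN and R21IF < R11IAN) holds, then the maximum sum rate of assignment (1,2) from equation (eq:12g) equals log2(1+(a+b)P), the joint-transmission sum rate. -/
open Real

lemma key_split (x y P : ℝ) (hx : 0 < x) (hy : 0 < y) (hP : 0 < P) :
    logb 2 (1 + x * P) + logb 2 (1 + y * P / (1 + x * P)) = logb 2 (1 + (x + y) * P) := by
  have h1 : (0:ℝ) < 1 + x * P := by positivity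
  have h2 : (0:ℝ) < 1 + y * P / (1 + x * P) := by positivity
  rw [← Real.logb_mul (ne_of_gt h1) (ne_of_gt h2)]
  congr 1
  field_simp
  ring

theorem stmt11 (a b c d P : ℝ) (ha : 0 < a) (hb : 0 < b) (hc : 0 < c) (hd : 0 < d)
    (hP : 0 < P)
    (heq : logb 2 (1 + (a + b) * P) = logb 2 (1 + (c + d) * P))
    (hnota : ¬ (logb 2 (1 + b * P / (1 + a * P)) > logb 2 (1 + d * P) ∧
                logb 2 (1 + c * P / (1 + d * P)) > logb 2 (1 + a * P)))
    (hnotb : ¬ (logb 2 (1 + b * P) < logb 2 (1 + d * P / (1 + c * P)) ∧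
                logb 2 (1 + c * P) < logb 2 (1 + a * P / (1 + b * P)))) :
    max (max (min (min (logb 2 (1 + (a + b) * P)) (logb 2 (1 + (c + d) * P)))
                  (logb 2 (1 + a * P) + logb 2 (1 + d * P)))
             (logb 2 (1 + a * P) +
                min (logb 2 (1 + b * P / (1 + a * P))) (logb 2 (1 + d * P / (1 + c * P)))))
        (max (logb 2 (1 + d * P) +
                min (logb 2 (1 + c * P / (1 + d * P))) (logb 2 (1 + a * P / (1 + b * P))))
             (logb 2 (1 + a * P / (1 + b * P)) + logb 2 (1 + d * P / (1 + c * P)))) =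
      logb 2 (1 + (a + b) * P) := by
  have kab := key_split a b P ha hb hP
  have kcd := key_split c d P hc hd hP
  have kba : logb 2 (1 + b * P) + logb 2 (1 + a * P / (1 + b * P)) =
      logb 2 (1 + (a + b) * P) := by
    have := key_split b a P hb ha hP; rwa [add_comm b a] at this
  have kdc : logb 2 (1 + d * P) + logb 2 (1 + c * P / (1 + d * P)) =
      logb 2 (1 + (c + d) * P) := by
    have := key_split d c P hd hc hP; rwa [add_comm d c] at this
  set S := logb 2 (1 + (a + b) * P) with hS
  -- term 4 bound
  have t4 : logb 2 (1 + a * P / (1 + b * P)) + logb 2 (1 + d * P / (1 + c * P)) ≤ S := by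
    rcases not_and_or.mp hnotb with h | h <;> push_neg at h
    · calc logb 2 (1 + a * P / (1 + b * P)) + logb 2 (1 + d * P / (1 + c * P))
          ≤ logb 2 (1 + a * P / (1 + b * P)) + logb 2 (1 + b * P) := add_le_add_right h _
        _ = S := by rw [add_comm, kba]
    · calc logb 2 (1 + a * P / (1 + b * P)) + logb 2 (1 + d * P / (1 + c * P))
          ≤ logb 2 (1 + c * P) + logb 2 (1 + d * P / (1 + c * P)) := add_le_add_left h _
        _ = S := by rw [kcd, heq]
  -- S ≤ R11 + R22
  have big : S ≤ logb 2 (1 + a * P) + logb 2 (1 + d * P) := by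
    rcases not_and_or.mp hnota with h | h <;> push_neg at h
    · calc S = logb 2 (1 + a * P) + logb 2 (1 + b * P / (1 + a * P)) := kab.symm
        _ ≤ _ := add_le_add_right h _
    · calc S = logb 2 (1 + d * P) + logb 2 (1 + c * P / (1 + d * P)) := by rw [heq, ← kdc]
        _ ≤ logb 2 (1 + d * P) + logb 2 (1 + a * P) := add_le_add_right h _
        _ = _ := add_comm _ _
  apply le_antisymm
  · apply max_le
    · apply max_le
      · exact min_le_of_left_le (min_le_left _ _)
      · calc _ ≤ logb 2 (1 + a * P) + logb 2 (1 + b * P / (1 + a * P)) :=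
            add_le_add_right (min_le_left _ _) _
          _ = S := kab
    · apply max_le
      · calc _ ≤ logb 2 (1 + d * P) + logb 2 (1 + c * P / (1 + d * P)) :=
            add_le_add_right (min_le_left _ _) _
          _ = S := by rw [kdc, heq]
      · exact t4
  · refine le_trans ?_ (le_max_left _ _)
    refine le_trans ?_ (le_max_left _ _)
    exact le_min (le_min (le_refl S) (le_of_eq heq)) big
end

section
/- For a,b,c,d,P > 0 with a+b > c+d (so receiver 1's MAC is better): if a > c (i.e., R11IF > R21IF) then the configuration (receiver 1 decodes interference, receiver 2 does not) achieves sum rate at least as large as the both-decode configuration, i.e., log2(1+aP) + min{log2(1+bP/(1+aP)), log2(1+dP/(1+cP))} ≥ min{log2(1+(a+b)P), log2(1+(c+d)P), log2(1+aP)+log2(1+dP)}. -/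
open Real

theorem stmt12 (a b c d P : ℝ) (ha : 0 < a) (hb : 0 < b) (hc : 0 < c) (hd : 0 < d)
    (hP : 0 < P) (hmac : a + b > c + d) (hac : a > c) :
    logb 2 (1 + a * P) +
        min (logb 2 (1 + b * P / (1 + a * P))) (logb 2 (1 + d * P / (1 + c * P))) ≥
      min (min (logb 2 (1 + (a + b) * P)) (logb 2 (1 + (c + d) * P)))
          (logb 2 (1 + a * P) + logb 2 (1 + d * P)) := by
  have h1 : (0:ℝ) < 1 + a * P := by positivity
  have h2 : (0:ℝ) < 1 + c * P := by positivity
  have h3 : (0:ℝ) < 1 + (a + b) * P := by positivity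
  have h4 : (0:ℝ) < 1 + (c + d) * P := by positivity
  have eX : logb 2 (1 + b * P / (1 + a * P))
      = logb 2 (1 + (a + b) * P) - logb 2 (1 + a * P) := by
    rw [show 1 + b * P / (1 + a * P) = (1 + (a + b) * P) / (1 + a * P) by
      field_simp; ring]
    exact Real.logb_div h3.ne' h1.ne'
  have eY : logb 2 (1 + d * P / (1 + c * P))
      = logb 2 (1 + (c + d) * P) - logb 2 (1 + c * P) := by
    rw [show 1 + d * P / (1 + c * P) = (1 + (c + d) * P) / (1 + c * P) by
      field_simp; ring]
    exact Real.logb_div h4.ne' h2.ne'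
  have hmono : logb 2 (1 + c * P) ≤ logb 2 (1 + a * P) :=
    by
      gcongr
      nlinarith
  refine le_trans (min_le_left _ _) ?_
  rcases le_total (logb 2 (1 + b * P / (1 + a * P))) (logb 2 (1 + d * P / (1 + c * P)))
    with h | h
  · rw [min_eq_left h, eX]
    have := min_le_left (logb 2 (1 + (a + b) * P)) (logb 2 (1 + (c + d) * P))
    linarith
  · rw [min_eq_right h, eY]
    have := min_le_right (logb 2 (1 + (a + b) * P)) (logb 2 (1 + (c + d) * P))
    linarith
end

section
/- For a,b,c,d,P > 0: if log2(1+aP) < log2(1+cP/(1+dP)) and log2(1+dP) < log2(1+bP/(1+aP)) (i.e., R11IF < R21IAN and R22IF < R12IAN), then log2(1+bP/(1+aP)) + log2(1+cP/(1+dP)) > max{log2(1+(a+b)P), log2(1+(c+d)P)}. -/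
open Real

theorem stmt14 (a b c d P : ℝ) (ha : 0 < a) (hb : 0 < b) (hc : 0 < c) (hd : 0 < d)
    (hP : 0 < P)
    (h1 : logb 2 (1 + a * P) < logb 2 (1 + c * P / (1 + d * P)))
    (h2 : logb 2 (1 + d * P) < logb 2 (1 + b * P / (1 + a * P))) :
    logb 2 (1 + b * P / (1 + a * P)) + logb 2 (1 + c * P / (1 + d * P)) >
      max (logb 2 (1 + (a + b) * P)) (logb 2 (1 + (c + d) * P)) := by
  have hA : (0:ℝ) < 1 + a*P := by positivity
  have hD : (0:ℝ) < 1 + d*P := by positivity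
  have e1 : 1 + (a+b)*P = (1 + a*P) * (1 + b*P/(1+a*P)) := by
    field_simp; ring
  have e2 : 1 + (c+d)*P = (1 + d*P) * (1 + c*P/(1+d*P)) := by
    field_simp; ring
  rw [gt_iff_lt, max_lt_iff]
  constructor
  · rw [e1, logb_mul (by positivity) (by positivity)]
    linarith
  · rw [e2, logb_mul (by positivity) (by positivity)]
    linarith
end

section
/- For a,b,c,d,P > 0, the conditions (log2(1+bP) < log2(1+dP/(1+cP)) and log2(1+cP) < log2(1+aP/(1+bP))) and (log2(1+aP) < log2(1+cP/(1+dP)) and log2(1+dP) < log2(1+bP/(1+aP))) cannot both hold. -/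
open Real

theorem stmt15 (a b c d P : ℝ) (ha : 0 < a) (hb : 0 < b) (hc : 0 < c) (hd : 0 < d)
    (hP : 0 < P) :
    ¬ ((logb 2 (1 + b * P) < logb 2 (1 + d * P / (1 + c * P)) ∧
        logb 2 (1 + c * P) < logb 2 (1 + a * P / (1 + b * P))) ∧
       (logb 2 (1 + a * P) < logb 2 (1 + c * P / (1 + d * P)) ∧
        logb 2 (1 + d * P) < logb 2 (1 + b * P / (1 + a * P)))) := by
  rintro ⟨⟨h1, h2⟩, h3, h4⟩
  have hb2 : (1:ℝ) < 2 := one_lt_two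
  have pa : 0 < 1 + a * P := by positivity
  have pb : 0 < 1 + b * P := by positivity
  have pc : 0 < 1 + c * P := by positivity
  have pd : 0 < 1 + d * P := by positivity
  rw [Real.logb_lt_logb_iff hb2 pb (by positivity)] at h1
  rw [Real.logb_lt_logb_iff hb2 pc (by positivity)] at h2
  rw [Real.logb_lt_logb_iff hb2 pa (by positivity)] at h3
  rw [Real.logb_lt_logb_iff hb2 pd (by positivity)] at h4
  have e1 : d * P / (1 + c * P) ≤ d * P := div_le_self (by positivity) (le_add_of_nonneg_right (by positivity))
  have e2 : a * P / (1 + b * P) ≤ a * P := div_le_self (by positivity) (le_add_of_nonneg_right (by positivity))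
  have e3 : c * P / (1 + d * P) ≤ c * P := div_le_self (by positivity) (le_add_of_nonneg_right (by positivity))
  linarith
end
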